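/- Let n ≥ 1, let p ∈ ℝ^n satisfy 0 = p_0 < p_1 < ⋯ < p_n < 1, and define ε ∈ ℝ^n by ε_j = √(p_j(1−p_j)) − √(p_{j−1}(1−p_{j−1})). Then εᵀ B_KL(p) ε ≤ 3 + ln(1/p_1) + ln(1/(1−p_n)); that is, ∑_{j=1}^n (√(p_j(1−p_j)) − √(p_{j−1}(1−p_{j−1})))²/(p_j − p_{j−1}) + p_n ≤ 3 + ln(1/p_1) + ln(1/(1−p_n)). -/

import Mathlib

noncomputable def FRpot (x : ℝ) : ℝ :=
  Real.log (min x (1/2)) - Real.log (min (1-x) (1/2)) + (if 1/2 < x then 3 else 0)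

-- left interval lemma
lemma lem_left' {a b : ℝ} (ha : 0 < a) (hab : a < b) (hb : b ≤ 1/2) :
    (Real.sqrt (b*(1-b)) - Real.sqrt (a*(1-a)))^2 / (b-a) + (b-a)
      ≤ Real.log b - Real.log a := by
  have hb0 : 0 < b := ha.trans hab
  have ha1 : a < 1 := by linarith
  have hb1 : b < 1 := by linarith
  set s := Real.sqrt a with hs_def
  set t := Real.sqrt b with ht_def
  have hs : 0 < s := Real.sqrt_pos.2 ha
  have ht : 0 < t := Real.sqrt_pos.2 hb0
  have hst : s < t := Real.sqrt_lt_sqrt ha.le hab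
  have hs2 : s^2 = a := Real.sq_sqrt ha.le
  have ht2 : t^2 = b := Real.sq_sqrt hb0.le
  have hfb : Real.sqrt (b*(1-b)) = t * Real.sqrt (1-b) := Real.sqrt_mul hb0.le _
  have hfa : Real.sqrt (a*(1-a)) = s * Real.sqrt (1-a) := Real.sqrt_mul ha.le _
  have hfage : s * Real.sqrt (1-b) ≤ Real.sqrt (a*(1-a)) := by
    rw [hfa]
    exact mul_le_mul_of_nonneg_left (Real.sqrt_le_sqrt (by linarith)) hs.le
  have hsub1b : Real.sqrt (1-b) ≤ 1 := Real.sqrt_le_one.2 (by linarith)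
  have h1bnn : (0:ℝ) ≤ Real.sqrt (1-b) := Real.sqrt_nonneg _
  have hdiff_le : Real.sqrt (b*(1-b)) - Real.sqrt (a*(1-a)) ≤ t - s := by
    have h1 : Real.sqrt (b*(1-b)) - Real.sqrt (a*(1-a)) ≤ (t-s) * Real.sqrt (1-b) := by
      rw [hfb]; nlinarith [hfage]
    have h2 : (t-s) * Real.sqrt (1-b) ≤ (t-s)*1 :=
      mul_le_mul_of_nonneg_left hsub1b (by linarith)
    linarith
  have hdiff_nn : 0 ≤ Real.sqrt (b*(1-b)) - Real.sqrt (a*(1-a)) := by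
    have hle : a*(1-a) ≤ b*(1-b) := by nlinarith
    have := Real.sqrt_le_sqrt hle
    linarith
  have hsq : (Real.sqrt (b*(1-b)) - Real.sqrt (a*(1-a)))^2 ≤ (t-s)^2 := by
    have := sq_le_sq' (by linarith : -(t-s) ≤ Real.sqrt (b*(1-b)) - Real.sqrt (a*(1-a))) hdiff_le
    exact this
  have hba : b - a = (t-s)*(t+s) := by nlinarith
  have htsne : t - s ≠ 0 := by linarith
  have hterm : (Real.sqrt (b*(1-b)) - Real.sqrt (a*(1-a)))^2/(b-a) ≤ (t-s)/(t+s) := by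
    rw [hba]
    have h1 : 0 < (t-s)*(t+s) := by nlinarith
    have h2 : (t-s)^2 / ((t-s)*(t+s)) = (t-s)/(t+s) := by
      rw [sq, mul_div_mul_left _ _ htsne]
    calc (Real.sqrt (b*(1-b)) - Real.sqrt (a*(1-a)))^2/((t-s)*(t+s))
        ≤ (t-s)^2/((t-s)*(t+s)) := by gcongr
      _ = (t-s)/(t+s) := h2
  have hlog : (t-s)/t ≤ Real.log t - Real.log s := by
    have h := Real.log_le_sub_one_of_pos (show 0 < s/t from div_pos hs ht)
    rw [Real.log_div hs.ne' ht.ne'] at h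
    have h2 : s/t - 1 = -((t-s)/t) := by field_simp; ring
    rw [h2] at h
    linarith
  have hlogb : Real.log b = 2 * Real.log t := by
    rw [← ht2, Real.log_pow]; push_cast; ring
  have hloga : Real.log a = 2 * Real.log s := by
    rw [← hs2, Real.log_pow]; push_cast; ring
  have e2 : t^2 ≤ 1/2 := by rw [ht2]; exact hb
  have e1 : t*s ≤ 1/2 := by nlinarith only [mul_lt_mul_of_pos_left hst ht, e2]
  have h3 : t^3 ≤ (1/2)*t := by nlinarith only [mul_le_mul_of_nonneg_left e2 ht.le]
  have h4 : t^2*s ≤ (1/2)*s := by nlinarith only [mul_le_mul_of_nonneg_left e2 hs.le]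
  have h5 : t*s^2 ≤ (1/2)*s := by nlinarith only [mul_le_mul_of_nonneg_left e1 hs.le]
  have hb2 : t*(t+s)^2 ≤ t + 2*s := by nlinarith only [h3, h4, h5, hs, hst]
  have hkey : (t-s)/(t+s) + (b-a) ≤ 2*((t-s)/t) := by
    rw [hba]
    rw [div_add' _ _ _ (by positivity : t+s ≠ 0), mul_div_assoc']
    rw [div_le_div_iff₀ (by positivity) ht]
    nlinarith only [mul_le_mul_of_nonneg_left hb2 (by linarith : (0:ℝ) ≤ t - s), hs, ht, hst]
  calc (Real.sqrt (b*(1-b)) - Real.sqrt (a*(1-a)))^2 / (b-a) + (b-a)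
      ≤ (t-s)/(t+s) + (b-a) := by linarith
    _ ≤ 2*((t-s)/t) := hkey
    _ ≤ 2*(Real.log t - Real.log s) := by linarith
    _ = Real.log b - Real.log a := by rw [hlogb, hloga]; ring

lemma lem_right' {a b : ℝ} (ha : 1/2 ≤ a) (hab : a < b) (hb : b < 1) :
    (Real.sqrt (b*(1-b)) - Real.sqrt (a*(1-a)))^2 / (b-a) + (b-a)
      ≤ Real.log (1-a) - Real.log (1-b) := by
  have h := lem_left' (a := 1-b) (b := 1-a) (by linarith) (by linarith) (by linarith)
  have e1 : (1-b)*(1-(1-b)) = b*(1-b) := by ring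
  have e2 : (1-a)*(1-(1-a)) = a*(1-a) := by ring
  rw [e1, e2] at h
  have e3 : (1-a) - (1-b) = b - a := by ring
  rw [e3] at h
  have e4 : (Real.sqrt (a*(1-a)) - Real.sqrt (b*(1-b)))^2
      = (Real.sqrt (b*(1-b)) - Real.sqrt (a*(1-a)))^2 := by ring
  rw [e4] at h
  exact h

lemma lem_mid' {a b : ℝ} (ha : 0 < a) (ha2 : a ≤ 1/2) (hb2 : 1/2 ≤ b) (hb : b < 1)
    (hab : a < b) :
    (Real.sqrt (b*(1-b)) - Real.sqrt (a*(1-a)))^2 / (b-a) + (b-a) ≤ 3 := by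
  have hfa : 0 < Real.sqrt (a*(1-a)) := Real.sqrt_pos.2 (by nlinarith only [ha, ha2])
  have hfb : 0 ≤ Real.sqrt (b*(1-b)) := Real.sqrt_nonneg _
  set u := Real.sqrt (a*(1-a)) with hu
  set v := Real.sqrt (b*(1-b)) with hv
  have hu2 : u^2 = a*(1-a) := Real.sq_sqrt (by nlinarith only [ha, ha2])
  have hv2 : v^2 = b*(1-b) := Real.sq_sqrt (by nlinarith only [hb2, hb])
  set s := Real.sqrt a with hs
  set r := Real.sqrt (1-b) with hr
  have hs2 : s^2 = a := Real.sq_sqrt ha.le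
  have hr2 : r^2 = 1-b := Real.sq_sqrt (by linarith)
  have hs0 : 0 < s := Real.sqrt_pos.2 ha
  have hr0 : 0 ≤ r := Real.sqrt_nonneg _
  have hsu : s^2 ≤ 2*u^2 := by rw [hu2, ← hs2]; nlinarith only [hs2, ha, ha2]
  have hrv : r^2 ≤ 2*v^2 := by rw [hv2, ← hr2]; nlinarith only [hr2, hb2, hb]
  have hfact : (v-u)*(v+u) = (b-a)*(r^2-s^2) := by
    rw [hr2, hs2]; nlinarith only [hu2, hv2]
  have hsq_eq : (v-u)^2*(v+u)^2 = (b-a)^2*(r^2-s^2)^2 := by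
    rw [← mul_pow, hfact, mul_pow]
  have hrs1 : (r-s)^2 ≤ 1 := by
    nlinarith only [hr2, hs2, mul_nonneg hr0 hs0.le, ha2, hb2]
  have h6 : r^2*s^2 ≤ 4*(u^2*v^2) := by nlinarith only [hsu, hrv, sq_nonneg r, sq_nonneg s, sq_nonneg u, sq_nonneg v]
  have hrs_uv : r*s ≤ 2*(u*v) := by
    nlinarith only [h6, mul_nonneg hr0 hs0.le, mul_nonneg hfa.le hfb]
  have hsum2 : (r+s)^2 ≤ 2*(v+u)^2 := by nlinarith only [hsu, hrv, hrs_uv]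
  have k1 : (r^2-s^2)^2 ≤ (r+s)^2 := by
    nlinarith only [mul_le_mul_of_nonneg_right hrs1 (sq_nonneg (r+s))]
  have k2 : (b-a)^2*(r^2-s^2)^2 ≤ (b-a)^2*(2*(v+u)^2) :=
    mul_le_mul_of_nonneg_left (k1.trans hsum2) (sq_nonneg (b-a))
  have hprod : (v-u)^2*(v+u)^2 ≤ (2*(b-a)^2)*(v+u)^2 := by
    rw [hsq_eq]; nlinarith only [k2]
  have hvu_pos : 0 < (v+u)^2 := by positivity
  have hmain : (v-u)^2 ≤ 2*(b-a)^2 := le_of_mul_le_mul_right (by linarith [hprod]) hvu_pos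
  have hba : 0 < b - a := by linarith
  have hterm : (v-u)^2/(b-a) ≤ 2*(b-a) := by
    rw [div_le_iff₀ hba]; nlinarith only [hmain]
  have hba1 : b - a ≤ 1 := by linarith
  linarith

lemma lem_master' {a b : ℝ} (ha : 0 < a) (hab : a < b) (hb : b < 1) :
    (Real.sqrt (b*(1-b)) - Real.sqrt (a*(1-a)))^2 / (b-a) + (b-a)
      ≤ FRpot b - FRpot a := by
  rcases le_or_gt b (1/2) with hble | hbgt
  · -- left case
    have hF : FRpot b - FRpot a = Real.log b - Real.log a := by
      unfold FRpot
      rw [min_eq_left hble, min_eq_left (by linarith : a ≤ 1/2),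
        min_eq_right (by linarith : (1:ℝ)/2 ≤ 1-b), min_eq_right (by linarith : (1:ℝ)/2 ≤ 1-a),
        if_neg (by linarith), if_neg (by linarith)]
      ring
    rw [hF]
    exact lem_left' ha hab hble
  · rcases le_or_gt (1/2) a with hage | halt
    · -- right case
      have h := lem_right' hage hab hb
      have hF : Real.log (1-a) - Real.log (1-b) ≤ FRpot b - FRpot a := by
        unfold FRpot
        rw [min_eq_right hbgt.le, min_eq_right hage,
          min_eq_left (by linarith : 1-b ≤ 1/2), min_eq_left (by linarith : 1-a ≤ 1/2),
          if_pos hbgt]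
        split_ifs <;> norm_num <;> linarith
      linarith
    · -- middle case
      have h := lem_mid' ha halt.le hbgt.le hb hab
      have hF : (3:ℝ) ≤ FRpot b - FRpot a := by
        unfold FRpot
        rw [min_eq_right hbgt.le, min_eq_left halt.le,
          min_eq_left (by linarith : 1-b ≤ 1/2), min_eq_right (by linarith : (1:ℝ)/2 ≤ 1-a),
          if_pos hbgt, if_neg (by linarith)]
        have l1 : Real.log a ≤ Real.log (1/2) := Real.log_le_log ha halt.le
        have l2 : Real.log (1-b) ≤ Real.log (1/2) := Real.log_le_log (by linarith) (by linarith)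
        linarith
      linarith

lemma telescope_sum' (g : ℕ → ℝ) (n : ℕ) (hn : 1 ≤ n) :
    ∑ j ∈ Finset.Icc 2 n, (g j - g (j-1)) = g n - g 1 := by
  induction n with
  | zero => omega
  | succ k ih =>
    rcases Nat.lt_or_ge k 1 with hk | hk
    · interval_cases k
      · simp
    · rw [Finset.sum_Icc_succ_top (by omega : 2 ≤ k+1), ih hk]
      simp

/-- Quadratic-form bound for the L1-optimal perturbation: for `0 = p₀ < p₁ < ⋯ < pₙ < 1`
and `εⱼ = √(pⱼ(1−pⱼ)) − √(pⱼ₋₁(1−pⱼ₋₁))`,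
`εᵀ B_KL(p) ε = ∑ⱼ εⱼ²/(pⱼ−pⱼ₋₁) + pₙ ≤ 3 + ln(1/p₁) + ln(1/(1−pₙ))`. -/
theorem quadForm_sqrt_perturbation_le (n : ℕ) (hn : 1 ≤ n) (p : ℕ → ℝ)
    (hp0 : p 0 = 0)
    (hmono : ∀ i, i < n → p i < p (i + 1))
    (hpn : p n < 1) :
    (∑ j ∈ Finset.Icc 1 n,
        (Real.sqrt (p j * (1 - p j)) - Real.sqrt (p (j - 1) * (1 - p (j - 1)))) ^ 2
          / (p j - p (j - 1)))
      + p n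
    ≤ 3 + Real.log (1 / p 1) + Real.log (1 / (1 - p n)) := by
  -- monotonicity facts
  have hle : ∀ j : ℕ, j ≤ n → ∀ i : ℕ, i ≤ j → p i ≤ p j := by
    intro j
    induction j with
    | zero => intro _ i hi; simp [Nat.le_zero.mp hi]
    | succ k ih =>
      intro hkn i hik
      rcases Nat.eq_or_lt_of_le hik with h | h
      · rw [h]
      · have h1 : p i ≤ p k := ih (by omega) i (by omega)
        have h2 : p k < p (k+1) := hmono k (by omega)
        linarith
  have hlt : ∀ i j : ℕ, i < j → j ≤ n → p i < p j := by
    intro i j hij hjn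
    have h1 : p i ≤ p (j-1) := hle (j-1) (by omega) i (by omega)
    have h2 : p (j-1) < p (j-1+1) := hmono (j-1) (by omega)
    have h3 : j - 1 + 1 = j := by omega
    rw [h3] at h2
    linarith
  have hp1pos : 0 < p 1 := by
    have := hlt 0 1 (by omega) hn
    linarith [hp0 ▸ this]
  have hp1n : p 1 ≤ p n := hle n le_rfl 1 hn
  have hp1lt1 : p 1 < 1 := lt_of_le_of_lt hp1n hpn
  have hpnpos : 0 < p n := lt_of_lt_of_le hp1pos hp1n
  -- split off the first term
  have hsplit : Finset.Icc 1 n = insert 1 (Finset.Icc 2 n) := by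
    ext x
    simp only [Finset.mem_Icc, Finset.mem_insert]
    omega
  set T : ℕ → ℝ := fun j =>
    (Real.sqrt (p j * (1 - p j)) - Real.sqrt (p (j - 1) * (1 - p (j - 1)))) ^ 2
      / (p j - p (j - 1)) with hT
  have hnotmem : 1 ∉ Finset.Icc 2 n := by simp
  have hsum : ∑ j ∈ Finset.Icc 1 n, T j = T 1 + ∑ j ∈ Finset.Icc 2 n, T j := by
    rw [hsplit, Finset.sum_insert hnotmem]
  -- first term
  have hT1 : T 1 = 1 - p 1 := by
    rw [hT]
    simp only [Nat.sub_self, hp0]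
    have h0 : Real.sqrt (0*(1-0)) = 0 := by norm_num
    rw [h0, sub_zero, sub_zero, Real.sq_sqrt (by nlinarith : 0 ≤ p 1 * (1 - p 1))]
    rw [mul_comm, mul_div_assoc, div_self hp1pos.ne', mul_one]
  -- bound the tail sum
  set g : ℕ → ℝ := fun j => FRpot (p j) - p j with hg
  have htail : ∑ j ∈ Finset.Icc 2 n, T j ≤ ∑ j ∈ Finset.Icc 2 n, (g j - g (j-1)) := by
    apply Finset.sum_le_sum
    intro j hj
    rw [Finset.mem_Icc] at hj
    have ha0 : 0 < p (j-1) := by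
      have h := hlt 0 (j-1) (by omega) (by omega)
      rw [hp0] at h; exact h
    have hab : p (j-1) < p j := hlt (j-1) j (by omega) hj.2
    have hb1 : p j < 1 := lt_of_le_of_lt (hle n le_rfl j hj.2) hpn
    have hm := lem_master' ha0 hab hb1
    simp only [hg, hT]
    linarith
  have hteleq := telescope_sum' g n hn
  have hS : ∑ j ∈ Finset.Icc 2 n, T j ≤ (FRpot (p n) - p n) - (FRpot (p 1) - p 1) := by
    have := htail.trans (le_of_eq hteleq)
    simpa [hg] using this
  -- F-gap bound
  have hlog2 : (0.6931471803:ℝ) < Real.log 2 := Real.log_two_gt_d9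
  have hloga_np : Real.log (p 1) ≤ 0 := Real.log_nonpos hp1pos.le hp1lt1.le
  have hlogb_np : Real.log (1 - p n) ≤ 0 := Real.log_nonpos (by linarith) (by linarith)
  have hgap : FRpot (p n) - FRpot (p 1) ≤ 2 + (- Real.log (p 1)) + (- Real.log (1 - p n)) := by
    unfold FRpot
    rcases le_or_gt (p n) (1/2) with h1 | h1
    · rw [min_eq_left h1, min_eq_left (le_trans hp1n h1),
        min_eq_right (by linarith : (1:ℝ)/2 ≤ 1 - p n), min_eq_right (by linarith : (1:ℝ)/2 ≤ 1 - p 1),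
        if_neg (by linarith), if_neg (by linarith)]
      have hpn0 : Real.log (p n) ≤ 0 := Real.log_nonpos hpnpos.le (by linarith)
      linarith
    · rcases le_or_gt (p 1) (1/2) with h2 | h2
      · rw [min_eq_right h1.le, min_eq_left h2,
          min_eq_left (by linarith : 1 - p n ≤ 1/2), min_eq_right (by linarith : (1:ℝ)/2 ≤ 1 - p 1),
          if_pos h1, if_neg (by linarith)]
        have hl : Real.log (1/2) = - Real.log 2 := by rw [one_div, Real.log_inv]
        rw [hl]
        linarith
      · rw [min_eq_right h1.le, min_eq_right h2.le,
          min_eq_left (by linarith : 1 - p n ≤ 1/2), min_eq_left (by linarith : 1 - p 1 ≤ 1/2),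
          if_pos h1, if_pos h2]
        have hlp1 : Real.log (1 - p 1) ≤ 0 := Real.log_nonpos (by linarith) (by linarith)
        linarith
  rw [one_div, Real.log_inv, one_div, Real.log_inv, hsum, hT1]
  linarith
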